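/- Let p, p′, r, r′ : ℤ → [0,1] and θ, θ′, κ, κ′ : ℤ → [0,2π) satisfy (for both the unprimed and primed families): p₀ = 1 (so q₀ = 0), θ₀ = 0, p_x < 1 for all x ≥ 1 (so q_x ≠ 0 for x ≥ 1), θ_x = 0 whenever p_x = 0, and κ_x = 0 whenever r_x = 0. Since q₀ = 0, the closed subspace H_{[1,∞)} = ⊕_{x≥1} H_x is invariant under U_{p,r,θ,κ} and under U_{p′,r′,θ′,κ′}; let V and V′ denote their respective restrictions to H_{[1,∞)}. Then V and V′ are unitarily equivalent via a unitary W on H_{[1,∞)} with W H_x = H_x for all x ≥ 1 if and only if p_x = p′_x, r_x = r′_x, θ_x = θ′_x and κ_x = κ′_x for all x ≥ 1. -/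

import Mathlib

noncomputable section

/-- `H = ⊕_{x∈ℤ} H_x`, the ℓ² direct sum with each `H_x` a copy of `ℂ²`. -/
abbrev H : Type := lp (fun _ : ℤ × Fin 2 => ℂ) 2

/-- The canonical orthonormal basis vector `eᵢˣ` of `H_x` viewed in `H`. -/
def e (x : ℤ) (i : Fin 2) : H := lp.single 2 (x, i) 1

/-- The subspace `H_x` of `H`. -/
def Hx (x : ℤ) : Submodule ℂ H := Submodule.span ℂ {e x 0, e x 1}


lemma e_apply (x y : ℤ) (i j : Fin 2) :
    (e x i : ∀ _ : ℤ × Fin 2, ℂ) (y, j) = if y = x ∧ j = i then 1 else 0 := by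
  rw [e, lp.single_apply]
  by_cases h : (y, j) = (x, i)
  · simp [Prod.ext_iff] at h
    simp [h]
  · rw [Pi.single_apply, if_neg h]
    simp [Prod.ext_iff] at h
    by_cases h1 : y = x
    · simp [h1, h h1]
    · simp [h1]

lemma inner_e (x y : ℤ) (i j : Fin 2) :
    (inner ℂ (e x i) (e y j) : ℂ) = if x = y ∧ i = j then 1 else 0 := by
  rw [e, lp.inner_single_left, e_apply]
  simp [RCLike.inner_apply]

lemma mem_Hx_iff {x : ℤ} {ψ : H} : ψ ∈ Hx x ↔ ∃ α β : ℂ, ψ = α • e x 0 + β • e x 1 := by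
  rw [Hx, Submodule.mem_span_pair]
  constructor
  · rintro ⟨a, b, h⟩; exact ⟨a, b, h.symm⟩
  · rintro ⟨a, b, h⟩; exact ⟨a, b, h.symm⟩

/-- The rank-one operator `|u⟩⟨v| : w ↦ ⟨v, w⟩ u`. -/
def ketbra (u v : H) : H →L[ℂ] H := ((innerSL ℂ) v).smulRight u

/-- The orthogonal projection of `H` onto `H_x`. -/
def P (x : ℤ) : H →L[ℂ] H := ketbra (e x 0) (e x 0) + ketbra (e x 1) (e x 1)

/-- A unitary (linear isometric equivalence) viewed as a continuous linear map. -/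
def clm (U : H ≃ₗᵢ[ℂ] H) : H →L[ℂ] H := U.toLinearIsometry.toContinuousLinearMap

/-- `{u, v}` is an orthonormal basis of the two dimensional space `H_x`. -/
def ONBx (x : ℤ) (u v : H) : Prop :=
  u ∈ Hx x ∧ v ∈ Hx x ∧ ‖u‖ = 1 ∧ ‖v‖ = 1 ∧ (inner ℂ u v : ℂ) = 0

/-- The SSQW conditions: `U H_x ⊆ H_{x-1} ⊕ H_x ⊕ H_{x+1}` and
`rank(P_{x±1} U P_x) ≤ 1` for all `x`. -/
def SSQW (U : H ≃ₗᵢ[ℂ] H) : Prop :=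
  (∀ x : ℤ, ∀ ψ ∈ Hx x, U ψ ∈ Hx (x - 1) ⊔ Hx x ⊔ Hx (x + 1)) ∧
  (∀ x : ℤ, LinearMap.rank (((P (x + 1)).comp ((clm U).comp (P x))).toLinearMap) ≤ 1) ∧
  (∀ x : ℤ, LinearMap.rank (((P (x - 1)).comp ((clm U).comp (P x))).toLinearMap) ≤ 1)

/-- Unitary equivalence of quantum walks: conjugation by a unitary `W`
preserving every `H_x`. -/
def UnitEquiv (U U' : H ≃ₗᵢ[ℂ] H) : Prop :=
  ∃ W : H ≃ₗᵢ[ℂ] H,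
    (∀ x : ℤ, (Hx x).map (W.toLinearEquiv : H →ₗ[ℂ] H) = Hx x) ∧
    U' = (W.symm.trans U).trans W

/-- `V` is the quantum walk `U_{p,r,θ,κ}`: with `q_x = √(1-p_x²)` and
`s_x = √(1-r_x²)`, it sends `e^{iκ_x} r_x e₁ˣ + s_x e₂ˣ` to
`e^{iθ_x} p_x e₁ˣ + q_x e₂^{x+1}`, and `s_x e₁ˣ − e^{−iκ_x} r_x e₂ˣ` to
`q_{x−1} e₁^{x−1} − e^{−iθ_{x−1}} p_{x−1} e₂ˣ`, for every `x ∈ ℤ`. -/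
def IsUprtk (p r θ κ : ℤ → ℝ) (V : H ≃ₗᵢ[ℂ] H) : Prop :=
  ∀ x : ℤ,
    V ((Complex.exp (Complex.I * (κ x : ℂ)) * (r x : ℂ)) • e x 0
        + (Real.sqrt (1 - (r x) ^ 2) : ℂ) • e x 1)
      = (Complex.exp (Complex.I * (θ x : ℂ)) * (p x : ℂ)) • e x 0
        + (Real.sqrt (1 - (p x) ^ 2) : ℂ) • e (x + 1) 1 ∧
    V ((Real.sqrt (1 - (r x) ^ 2) : ℂ) • e x 0
        - (Complex.exp (-(Complex.I * (κ x : ℂ))) * (r x : ℂ)) • e x 1)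
      = (Real.sqrt (1 - (p (x - 1)) ^ 2) : ℂ) • e (x - 1) 0
        - (Complex.exp (-(Complex.I * (θ (x - 1) : ℂ))) * (p (x - 1) : ℂ)) • e x 1


lemma exp_mul_exp_neg (w : ℂ) : Complex.exp w * Complex.exp (-w) = 1 := by
  rw [← Complex.exp_add]; simp

lemma sqrt_mul_self' {t : ℝ} (ht0 : 0 ≤ t) (ht : t ≤ 1) :
    ((Real.sqrt (1 - t ^ 2) : ℝ) : ℂ) * ((Real.sqrt (1 - t ^ 2) : ℝ) : ℂ) = 1 - (t : ℂ) ^ 2 := by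
  have h : (0:ℝ) ≤ 1 - t ^ 2 := by nlinarith
  rw [← Complex.ofReal_mul, Real.mul_self_sqrt h]
  push_cast
  ring

lemma V_e0 {p r θ κ : ℤ → ℝ} (hr0 : ∀ x, 0 ≤ r x) (hr1 : ∀ x, r x ≤ 1) {V : H ≃ₗᵢ[ℂ] H}
    (hV : IsUprtk p r θ κ V) (x : ℤ) :
    V (e x 0) =
      (Complex.exp (-(Complex.I * (κ x : ℂ))) * (r x : ℂ) * (Complex.exp (Complex.I * (θ x : ℂ)) * (p x : ℂ))) • e x 0
      + (Complex.exp (-(Complex.I * (κ x : ℂ))) * (r x : ℂ) * (Real.sqrt (1 - (p x) ^ 2) : ℂ)) • e (x + 1) 1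
      + ((Real.sqrt (1 - (r x) ^ 2) : ℂ) * (Real.sqrt (1 - (p (x - 1)) ^ 2) : ℂ)) • e (x - 1) 0
      - ((Real.sqrt (1 - (r x) ^ 2) : ℂ) * (Complex.exp (-(Complex.I * (θ (x - 1) : ℂ))) * (p (x - 1) : ℂ))) • e x 1 := by
  obtain ⟨h1, h2⟩ := hV x
  have key : (Complex.exp (-(Complex.I * (κ x : ℂ))) * (r x : ℂ)) •
        ((Complex.exp (Complex.I * (κ x : ℂ)) * (r x : ℂ)) • e x 0
          + (Real.sqrt (1 - (r x) ^ 2) : ℂ) • e x 1)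
      + ((Real.sqrt (1 - (r x) ^ 2) : ℂ)) •
        ((Real.sqrt (1 - (r x) ^ 2) : ℂ) • e x 0
          - (Complex.exp (-(Complex.I * (κ x : ℂ))) * (r x : ℂ)) • e x 1) = e x 0 := by
    have hee := exp_mul_exp_neg (Complex.I * (κ x : ℂ))
    have hss := sqrt_mul_self' (hr0 x) (hr1 x)
    match_scalars
    · linear_combination (r x : ℂ) * (r x : ℂ) * hee + hss
    · ring
  calc V (e x 0) = (Complex.exp (-(Complex.I * (κ x : ℂ))) * (r x : ℂ)) •
        V ((Complex.exp (Complex.I * (κ x : ℂ)) * (r x : ℂ)) • e x 0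
          + (Real.sqrt (1 - (r x) ^ 2) : ℂ) • e x 1)
      + ((Real.sqrt (1 - (r x) ^ 2) : ℂ)) •
        V ((Real.sqrt (1 - (r x) ^ 2) : ℂ) • e x 0
          - (Complex.exp (-(Complex.I * (κ x : ℂ))) * (r x : ℂ)) • e x 1) := by
        rw [← map_smul, ← map_smul, ← map_add, key]
    _ = _ := by rw [h1, h2]; module

lemma V_e1 {p r θ κ : ℤ → ℝ} (hr0 : ∀ x, 0 ≤ r x) (hr1 : ∀ x, r x ≤ 1) {V : H ≃ₗᵢ[ℂ] H}
    (hV : IsUprtk p r θ κ V) (x : ℤ) :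
    V (e x 1) =
      ((Real.sqrt (1 - (r x) ^ 2) : ℂ) * (Complex.exp (Complex.I * (θ x : ℂ)) * (p x : ℂ))) • e x 0
      + ((Real.sqrt (1 - (r x) ^ 2) : ℂ) * (Real.sqrt (1 - (p x) ^ 2) : ℂ)) • e (x + 1) 1
      - (Complex.exp (Complex.I * (κ x : ℂ)) * (r x : ℂ) * (Real.sqrt (1 - (p (x - 1)) ^ 2) : ℂ)) • e (x - 1) 0
      + (Complex.exp (Complex.I * (κ x : ℂ)) * (r x : ℂ) * (Complex.exp (-(Complex.I * (θ (x - 1) : ℂ))) * (p (x - 1) : ℂ))) • e x 1 := by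
  obtain ⟨h1, h2⟩ := hV x
  have key : ((Real.sqrt (1 - (r x) ^ 2) : ℂ)) •
        ((Complex.exp (Complex.I * (κ x : ℂ)) * (r x : ℂ)) • e x 0
          + (Real.sqrt (1 - (r x) ^ 2) : ℂ) • e x 1)
      - (Complex.exp (Complex.I * (κ x : ℂ)) * (r x : ℂ)) •
        ((Real.sqrt (1 - (r x) ^ 2) : ℂ) • e x 0
          - (Complex.exp (-(Complex.I * (κ x : ℂ))) * (r x : ℂ)) • e x 1) = e x 1 := by
    have hee := exp_mul_exp_neg (Complex.I * (κ x : ℂ))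
    have hss := sqrt_mul_self' (hr0 x) (hr1 x)
    match_scalars
    · ring
    · linear_combination (r x : ℂ) * (r x : ℂ) * hee + hss
  calc V (e x 1) = ((Real.sqrt (1 - (r x) ^ 2) : ℂ)) •
        V ((Complex.exp (Complex.I * (κ x : ℂ)) * (r x : ℂ)) • e x 0
          + (Real.sqrt (1 - (r x) ^ 2) : ℂ) • e x 1)
      - (Complex.exp (Complex.I * (κ x : ℂ)) * (r x : ℂ)) •
        V ((Real.sqrt (1 - (r x) ^ 2) : ℂ) • e x 0
          - (Complex.exp (-(Complex.I * (κ x : ℂ))) * (r x : ℂ)) • e x 1) := by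
        rw [← map_smul, ← map_smul, ← map_sub, key]
    _ = _ := by rw [h1, h2]; module

/-- The closed subspace `H_{[n,∞)} = ⊕_{x ≥ n} H_x` of `H`. -/
def Hge (n : ℤ) : Submodule ℂ H :=
  (Submodule.span ℂ {v : H | ∃ x : ℤ, n ≤ x ∧ ∃ i : Fin 2, v = e x i}).topologicalClosure


lemma e_mem_Hge {n x : ℤ} (h : n ≤ x) (i : Fin 2) : e x i ∈ Hge n :=
  Submodule.le_topologicalClosure _ (Submodule.subset_span ⟨x, h, i, rfl⟩)

lemma eq_on_Hge {V V' : H ≃ₗᵢ[ℂ] H} {n : ℤ}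
    (h : ∀ x : ℤ, n ≤ x → ∀ i, V (e x i) = V' (e x i)) :
    ∀ ψ ∈ Hge n, V ψ = V' ψ := by
  have hsub : (↑(Submodule.span ℂ {v : H | ∃ x : ℤ, n ≤ x ∧ ∃ i : Fin 2, v = e x i}) : Set H)
      ⊆ {ψ : H | V ψ = V' ψ} := by
    intro φ hφ
    induction hφ using Submodule.span_induction with
    | mem v hv => obtain ⟨x, hx, i, rfl⟩ := hv; exact h x hx i
    | zero => simp
    | add u v _ _ hu hv => simp only [Set.mem_setOf_eq] at *; rw [map_add, map_add, hu, hv]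
    | smul t u _ hu => simp only [Set.mem_setOf_eq] at *; rw [map_smul, map_smul, hu]
  intro ψ hψ
  have hcl : IsClosed {ψ : H | V ψ = V' ψ} :=
    isClosed_eq V.continuous V'.continuous
  have : ψ ∈ closure (↑(Submodule.span ℂ {v : H | ∃ x : ℤ, n ≤ x ∧ ∃ i : Fin 2, v = e x i}) : Set H) := hψ
  exact closure_minimal hsub hcl this

lemma exp_I_inj {s t : ℝ} (hs : s ∈ Set.Ico 0 (2 * Real.pi)) (ht : t ∈ Set.Ico 0 (2 * Real.pi))
    (h : Complex.exp (Complex.I * (s : ℂ)) = Complex.exp (Complex.I * (t : ℂ))) : s = t := by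
  rw [Complex.exp_eq_exp_iff_exists_int] at h
  obtain ⟨m, hm⟩ := h
  have him := congrArg Complex.im hm
  simp [Complex.mul_im, Complex.add_im] at him
  -- him : s = t + m * (2 * π)  (roughly)
  have hπ := Real.pi_pos
  obtain ⟨hs0, hs2⟩ := hs
  obtain ⟨ht0, ht2⟩ := ht
  have hm1 : (-1 : ℝ) < (m : ℝ) := by nlinarith
  have hm2 : ((m : ℝ)) < 1 := by nlinarith
  have h1 : (-1 : ℤ) < m := by exact_mod_cast hm1
  have h2 : m < 1 := by exact_mod_cast hm2
  have : m = 0 := by omega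
  rw [this] at him
  simpa using him

lemma eq_of_sub_mul_eq_zero {A B M : ℂ} (h : (A - B) * M = 0) (hM : M ≠ 0) : A = B :=
  sub_eq_zero.mp ((mul_eq_zero.mp h).resolve_right hM)

lemma abs_exp_I (t : ℝ) : ‖Complex.exp (Complex.I * (t : ℂ))‖ = 1 := by
  rw [Complex.norm_exp]; simp

lemma abs_exp_negI (t : ℝ) : ‖Complex.exp (-(Complex.I * (t : ℂ)))‖ = 1 := by
  rw [Complex.norm_exp]; simp

set_option maxHeartbeats 2000000 in
/-- **Theorem 3.5, Case (2).** Suppose `p₀ = p′₀ = 1`,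
`θ₀ = θ′₀ = 0`, `p_x, p′_x < 1` for `x ≥ 1`, and the conventions `θ_x = 0` when
`p_x = 0`, `κ_x = 0` when `r_x = 0` hold.  Then the restrictions of
`U_{p,r,θ,κ}` and `U_{p′,r′,θ′,κ′}` to the invariant subspace `H_{[1,∞)}` are
unitarily equivalent via a unitary preserving each `H_x` (`x ≥ 1`) iff
`p_x = p′_x`, `r_x = r′_x`, `θ_x = θ′_x` and `κ_x = κ′_x` for all `x ≥ 1`. -/
theorem unitary_equiv_iff_case_two (p p' r r' θ θ' κ κ' : ℤ → ℝ)
    (hp : ∀ x : ℤ, p x ∈ Set.Icc (0 : ℝ) 1) (hp' : ∀ x : ℤ, p' x ∈ Set.Icc (0 : ℝ) 1)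
    (hr : ∀ x : ℤ, r x ∈ Set.Icc (0 : ℝ) 1) (hr' : ∀ x : ℤ, r' x ∈ Set.Icc (0 : ℝ) 1)
    (hθ : ∀ x : ℤ, θ x ∈ Set.Ico (0 : ℝ) (2 * Real.pi))
    (hθ' : ∀ x : ℤ, θ' x ∈ Set.Ico (0 : ℝ) (2 * Real.pi))
    (hκ : ∀ x : ℤ, κ x ∈ Set.Ico (0 : ℝ) (2 * Real.pi))
    (hκ' : ∀ x : ℤ, κ' x ∈ Set.Ico (0 : ℝ) (2 * Real.pi))
    (hp0 : p 0 = 1) (hp0' : p' 0 = 1) (hθ0 : θ 0 = 0) (hθ0' : θ' 0 = 0)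
    (hq : ∀ x : ℤ, 1 ≤ x → p x < 1) (hq' : ∀ x : ℤ, 1 ≤ x → p' x < 1)
    (hpθ : ∀ x : ℤ, p x = 0 → θ x = 0) (hpθ' : ∀ x : ℤ, p' x = 0 → θ' x = 0)
    (hrκ : ∀ x : ℤ, r x = 0 → κ x = 0) (hrκ' : ∀ x : ℤ, r' x = 0 → κ' x = 0)
    (V V' : H ≃ₗᵢ[ℂ] H)
    (hV : IsUprtk p r θ κ V) (hV' : IsUprtk p' r' θ' κ' V') :
    (∃ W : H ≃ₗᵢ[ℂ] H,
        (∀ x : ℤ, 1 ≤ x → (Hx x).map (W.toLinearEquiv : H →ₗ[ℂ] H) = Hx x) ∧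
        (∀ ψ ∈ Hge 1, W (V (W.symm ψ)) = V' ψ)) ↔
      (∀ x : ℤ, 1 ≤ x → p x = p' x ∧ r x = r' x ∧ θ x = θ' x ∧ κ x = κ' x) := by
  have hr0 : ∀ x, 0 ≤ r x := fun x => (hr x).1
  have hr1 : ∀ x, r x ≤ 1 := fun x => (hr x).2
  have hr0' : ∀ x, 0 ≤ r' x := fun x => (hr' x).1
  have hr1' : ∀ x, r' x ≤ 1 := fun x => (hr' x).2
  constructor
  · rintro ⟨W, hWmap, hWV⟩
    have hcoef : ∀ x : ℤ, ∃ mm : ℂ × ℂ × ℂ × ℂ, 1 ≤ x →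
        W (e x 0) = mm.1 • e x 0 + mm.2.1 • e x 1 ∧
        W (e x 1) = mm.2.2.1 • e x 0 + mm.2.2.2 • e x 1 := by
      intro x
      by_cases hx : 1 ≤ x
      · have h0 : W (e x 0) ∈ Hx x := by
          rw [← hWmap x hx]
          exact ⟨e x 0, Submodule.subset_span (Set.mem_insert _ _), rfl⟩
        have h1 : W (e x 1) ∈ Hx x := by
          rw [← hWmap x hx]
          exact ⟨e x 1, Submodule.subset_span (Set.mem_insert_iff.2 (Or.inr rfl)), rfl⟩
        obtain ⟨α, γ, hαγ⟩ := mem_Hx_iff.1 h0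
        obtain ⟨β, δ, hβδ⟩ := mem_Hx_iff.1 h1
        exact ⟨(α, γ, β, δ), fun _ => ⟨hαγ, hβδ⟩⟩
      · exact ⟨(0, 0, 0, 0), fun h => absurd h hx⟩
    choose mm hmm using hcoef
    set a : ℤ → ℂ := fun x => (mm x).1 with ha_def
    set c : ℤ → ℂ := fun x => (mm x).2.1 with hc_def
    set b : ℤ → ℂ := fun x => (mm x).2.2.1 with hb_def
    set d : ℤ → ℂ := fun x => (mm x).2.2.2 with hd_def
    have hWe0 : ∀ x : ℤ, 1 ≤ x → W (e x 0) = a x • e x 0 + c x • e x 1 :=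
      fun x hx => (hmm x hx).1
    have hWe1 : ∀ x : ℤ, 1 ≤ x → W (e x 1) = b x • e x 0 + d x • e x 1 :=
      fun x hx => (hmm x hx).2
    have hVW0 : ∀ x : ℤ, 1 ≤ x → W (V (e x 0)) = V' (W (e x 0)) := by
      intro x hx
      have hmem : W (e x 0) ∈ Hge 1 := by
        rw [hWe0 x hx]
        exact Submodule.add_mem _ (Submodule.smul_mem _ _ (e_mem_Hge hx 0))
          (Submodule.smul_mem _ _ (e_mem_Hge hx 1))
      have h := hWV (W (e x 0)) hmem
      rwa [LinearIsometryEquiv.symm_apply_apply] at h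
    have hVW1 : ∀ x : ℤ, 1 ≤ x → W (V (e x 1)) = V' (W (e x 1)) := by
      intro x hx
      have hmem : W (e x 1) ∈ Hge 1 := by
        rw [hWe1 x hx]
        exact Submodule.add_mem _ (Submodule.smul_mem _ _ (e_mem_Hge hx 0))
          (Submodule.smul_mem _ _ (e_mem_Hge hx 1))
      have h := hWV (W (e x 1)) hmem
      rwa [LinearIsometryEquiv.symm_apply_apply] at h
    -- unitarity of the 2x2 blocks
    have hu1 : ∀ x : ℤ, 1 ≤ x →
        (starRingEnd ℂ) (a x) * a x + (starRingEnd ℂ) (c x) * c x = 1 := by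
      intro x hx
      have h := W.inner_map_map (e x 0) (e x 0)
      rw [hWe0 x hx] at h
      simp [inner_add_left, inner_add_right, inner_smul_left, inner_smul_right, inner_e, -inner_self_eq_norm_sq_to_K] at h
      linear_combination h
    have hu2 : ∀ x : ℤ, 1 ≤ x →
        (starRingEnd ℂ) (a x) * b x + (starRingEnd ℂ) (c x) * d x = 0 := by
      intro x hx
      have h := W.inner_map_map (e x 0) (e x 1)
      rw [hWe0 x hx, hWe1 x hx] at h
      simp [inner_add_left, inner_add_right, inner_smul_left, inner_smul_right, inner_e, -inner_self_eq_norm_sq_to_K] at h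
      linear_combination h
    have hu3 : ∀ x : ℤ, 1 ≤ x →
        (starRingEnd ℂ) (b x) * b x + (starRingEnd ℂ) (d x) * d x = 1 := by
      intro x hx
      have h := W.inner_map_map (e x 1) (e x 1)
      rw [hWe1 x hx] at h
      simp [inner_add_left, inner_add_right, inner_smul_left, inner_smul_right, inner_e, -inner_self_eq_norm_sq_to_K] at h
      linear_combination h
    -- nonvanishing facts
    have hqpos : ∀ z : ℤ, 1 ≤ z → 0 < Real.sqrt (1 - p z ^ 2) := by
      intro z hz
      have h1 : 0 < 1 - p z ^ 2 := by nlinarith [(hp z).1, hq z hz]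
      exact Real.sqrt_pos.2 h1
    have hqpos' : ∀ z : ℤ, 1 ≤ z → 0 < Real.sqrt (1 - p' z ^ 2) := by
      intro z hz
      have h1 : 0 < 1 - p' z ^ 2 := by nlinarith [(hp' z).1, hq' z hz]
      exact Real.sqrt_pos.2 h1
    have hqne : ∀ z : ℤ, 1 ≤ z → ((Real.sqrt (1 - p z ^ 2) : ℝ) : ℂ) ≠ 0 :=
      fun z hz => Complex.ofReal_ne_zero.2 (ne_of_gt (hqpos z hz))
    have hs_of_r : ∀ z : ℤ, r z = 0 → Real.sqrt (1 - r z ^ 2) = 1 := by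
      intro z hz; rw [hz]; norm_num
    have hs_of_r' : ∀ z : ℤ, r' z = 0 → Real.sqrt (1 - r' z ^ 2) = 1 := by
      intro z hz; rw [hz]; norm_num
    have hexne : ∀ w : ℂ, Complex.exp w ≠ 0 := Complex.exp_ne_zero
    -- c vanishes
    have hcz : ∀ z : ℤ, 1 ≤ z → c z = 0 := by
      intro z hz
      have Eq0 := hVW0 (z + 1) (by omega)
      have Eq1 := hVW1 (z + 1) (by omega)
      rw [V_e0 hr0 hr1 hV (z + 1), hWe0 (z + 1) (by omega)] at Eq0
      rw [V_e1 hr0 hr1 hV (z + 1), hWe1 (z + 1) (by omega)] at Eq1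
      simp only [map_add, map_sub, map_smul] at Eq0 Eq1
      rw [V_e0 hr0' hr1' hV' (z + 1), V_e1 hr0' hr1' hV' (z + 1)] at Eq0 Eq1
      rw [show (z + 1 - 1 : ℤ) = z from by omega] at Eq0 Eq1
      rw [hWe0 (z + 1) (by omega), hWe1 (z + 1) (by omega), hWe1 (z + 1 + 1) (by omega),
        hWe0 z hz] at Eq0 Eq1
      have h1 := congrArg (fun u : H => (u : ∀ _ : ℤ × Fin 2, ℂ) (z, 1)) Eq0
      have h2 := congrArg (fun u : H => (u : ∀ _ : ℤ × Fin 2, ℂ) (z, 1)) Eq1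
      simp only [lp.coeFn_add, lp.coeFn_sub, lp.coeFn_smul, Pi.add_apply, Pi.sub_apply,
        Pi.smul_apply] at h1 h2
      simp [lp.coeFn_add, lp.coeFn_sub, lp.coeFn_smul, Pi.add_apply, Pi.sub_apply,
        Pi.smul_apply, smul_eq_mul, e_apply,
        show z ≠ z + 1 from by omega, show (z:ℤ) + 1 ≠ z from by omega,
        show z ≠ z + 1 + 1 from by omega, show (z:ℤ) + 1 + 1 ≠ z from by omega] at h1 h2
      have hqz : Real.sqrt (1 - p z ^ 2) ≠ 0 := ne_of_gt (hqpos z hz)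
      rcases h2 with (h | h) | h
      · rcases h1 with (h1' | h1') | h1'
        · rw [hs_of_r _ h] at h1'; norm_num at h1'
        · exact absurd h1' hqz
        · exact h1'
      · exact absurd h hqz
      · exact h
    have haa : ∀ z : ℤ, 1 ≤ z → (starRingEnd ℂ) (a z) * a z = 1 := by
      intro z hz
      have h := hu1 z hz
      rw [hcz z hz] at h
      simpa using h
    have hane : ∀ z : ℤ, 1 ≤ z → a z ≠ 0 := by
      intro z hz h
      have := haa z hz
      rw [h] at this
      simp at this
    have hbz : ∀ z : ℤ, 1 ≤ z → b z = 0 := by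
      intro z hz
      have h := hu2 z hz
      rw [hcz z hz] at h
      simp at h
      rcases h with h | h
      · exact absurd h (hane z hz)
      · exact h
    have hdd : ∀ z : ℤ, 1 ≤ z → (starRingEnd ℂ) (d z) * d z = 1 := by
      intro z hz
      have h := hu3 z hz
      rw [hbz z hz] at h
      simpa using h
    have hdne : ∀ z : ℤ, 1 ≤ z → d z ≠ 0 := by
      intro z hz h
      have := hdd z hz
      rw [h] at this
      simp at this
    have habs_a : ∀ z : ℤ, 1 ≤ z → ‖a z‖ = 1 := by
      intro z hz
      have h : (Complex.normSq (a z) : ℂ) = 1 := by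
        rw [Complex.normSq_eq_conj_mul_self]; exact haa z hz
      have h2 : Complex.normSq (a z) = 1 := by exact_mod_cast h
      rw [Complex.norm_def, h2, Real.sqrt_one]
    have habs_d : ∀ z : ℤ, 1 ≤ z → ‖d z‖ = 1 := by
      intro z hz
      have h : (Complex.normSq (d z) : ℂ) = 1 := by
        rw [Complex.normSq_eq_conj_mul_self]; exact hdd z hz
      have h2 : Complex.normSq (d z) = 1 := by exact_mod_cast h
      rw [Complex.norm_def, h2, Real.sqrt_one]
    have hWe0' : ∀ z : ℤ, 1 ≤ z → W (e z 0) = a z • e z 0 := by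
      intro z hz
      rw [hWe0 z hz, hcz z hz, zero_smul, add_zero]
    have hWe1' : ∀ z : ℤ, 1 ≤ z → W (e z 1) = d z • e z 1 := by
      intro z hz
      rw [hWe1 z hz, hbz z hz, zero_smul, zero_add]
    have hMain : ∀ x : ℤ, 1 ≤ x →
        (Complex.exp (-(Complex.I * (κ x : ℂ))) * (r x : ℂ) * (Complex.exp (Complex.I * (θ x : ℂ)) * (p x : ℂ)) * a x = a x * (Complex.exp (-(Complex.I * (κ' x : ℂ))) * (r' x : ℂ) * (Complex.exp (Complex.I * (θ' x : ℂ)) * (p' x : ℂ)))) ∧ (((Real.sqrt (1 - r x ^ 2) : ℝ) : ℂ) * (Complex.exp (-(Complex.I * (θ (x - 1) : ℂ))) * (p (x - 1) : ℂ)) * d x = a x * (((Real.sqrt (1 - r' x ^ 2) : ℝ) : ℂ) * (Complex.exp (-(Complex.I * (θ' (x - 1) : ℂ))) * (p' (x - 1) : ℂ)))) ∧ (Complex.exp (-(Complex.I * (κ x : ℂ))) * (r x : ℂ) * ((Real.sqrt (1 - p x ^ 2) : ℝ) : ℂ) * d (x + 1) = a x * (Complex.exp (-(Complex.I * (κ'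 x : ℂ))) * (r' x : ℂ) * ((Real.sqrt (1 - p' x ^ 2) : ℝ) : ℂ))) ∧ (((Real.sqrt (1 - r x ^ 2) : ℝ) : ℂ) * (Complex.exp (Complex.I * (θ x : ℂ)) * (p x : ℂ)) * a x = d x * (((Real.sqrt (1 - r' x ^ 2) : ℝ) : ℂ) * (Complex.exp (Complex.I * (θ' x : ℂ)) * (p' x : ℂ)))) ∧ (Complex.exp (Complex.I * (κ x : ℂ)) * (r x : ℂ) * (Complex.exp (-(Complex.I * (θ (x - 1) : ℂ))) * (p (x - 1) : ℂ)) * d x = d x * (Complex.exp (Complex.I * (κ' x : ℂ)) * (r' x : ℂ) * (Complex.exp (-(Complex.I * (θ' (x - 1) : ℂ))) * (p' (x - 1) : ℂ)))) ∧ (((Real.sqrt (1 - r x ^ 2) : ℝ) : ℂ) * ((Real.sqrt (1 - p x ^ 2) : ℝ) : ℂ) * d (x + 1) = d x * (((Real.sqrt (1 - r' x ^ 2) : ℝ) : ℂ) * ((Real.sqrt (1 - p' x ^ 2) : ℝ) : ℂ))) := by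
      intro x hx
      have Eq0 := hVW0 x hx
      have Eq1 := hVW1 x hx
      rw [V_e0 hr0 hr1 hV x, hWe0' x hx] at Eq0
      rw [V_e1 hr0 hr1 hV x, hWe1' x hx] at Eq1
      simp only [map_add, map_sub, map_smul] at Eq0 Eq1
      rw [V_e0 hr0' hr1' hV' x] at Eq0
      rw [V_e1 hr0' hr1' hV' x] at Eq1
      rw [hWe0' x hx, hWe1' x hx, hWe1' (x + 1) (by omega)] at Eq0 Eq1
      by_cases hx2 : 2 ≤ x
      · rw [hWe0' (x - 1) (by omega)] at Eq0 Eq1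
        have h3 := congrArg (fun u : H => (u : ∀ _ : ℤ × Fin 2, ℂ) (x, 0)) Eq0
        have h4 := congrArg (fun u : H => (u : ∀ _ : ℤ × Fin 2, ℂ) (x, 1)) Eq0
        have h7 := congrArg (fun u : H => (u : ∀ _ : ℤ × Fin 2, ℂ) (x + 1, 1)) Eq0
        have h5 := congrArg (fun u : H => (u : ∀ _ : ℤ × Fin 2, ℂ) (x, 0)) Eq1
        have h6 := congrArg (fun u : H => (u : ∀ _ : ℤ × Fin 2, ℂ) (x, 1)) Eq1
        have h8 := congrArg (fun u : H => (u : ∀ _ : ℤ × Fin 2, ℂ) (x + 1, 1)) Eq1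
        simp only [lp.coeFn_add, lp.coeFn_sub, lp.coeFn_smul, Pi.add_apply, Pi.sub_apply,
          Pi.smul_apply, smul_eq_mul, e_apply, show x ≠ x + 1 from by omega,
          show (x:ℤ) + 1 ≠ x from by omega, show x ≠ x - 1 from by omega,
          show (x:ℤ) - 1 ≠ x from by omega, show (x:ℤ) + 1 ≠ x - 1 from by omega,
          show (x:ℤ) - 1 ≠ x + 1 from by omega, show ((0:Fin 2) = 1) = False from by decide,
          show ((1:Fin 2) = 0) = False from by decide, eq_self_iff_true, and_true, true_and,
          and_false, false_and, and_self, if_true, if_false, mul_one, mul_zero, zero_mul,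
          one_mul, add_zero, zero_add, sub_zero, zero_sub, neg_zero, neg_neg,
          Complex.ofReal_zero, Complex.ofReal_one] at h3 h4 h7 h5 h6 h8
        exact ⟨by linear_combination h3, by linear_combination -h4, by linear_combination h7,
          by linear_combination h5, by linear_combination h6, by linear_combination h8⟩
      · have h10 : Real.sqrt (1 - p (x - 1) ^ 2) = 0 := by
          rw [show x - 1 = 0 from by omega, hp0]; norm_num
        have h10' : Real.sqrt (1 - p' (x - 1) ^ 2) = 0 := by
          rw [show x - 1 = 0 from by omega, hp0']; norm_num
        rw [h10, h10'] at Eq0 Eq1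
        have h3 := congrArg (fun u : H => (u : ∀ _ : ℤ × Fin 2, ℂ) (x, 0)) Eq0
        have h4 := congrArg (fun u : H => (u : ∀ _ : ℤ × Fin 2, ℂ) (x, 1)) Eq0
        have h7 := congrArg (fun u : H => (u : ∀ _ : ℤ × Fin 2, ℂ) (x + 1, 1)) Eq0
        have h5 := congrArg (fun u : H => (u : ∀ _ : ℤ × Fin 2, ℂ) (x, 0)) Eq1
        have h6 := congrArg (fun u : H => (u : ∀ _ : ℤ × Fin 2, ℂ) (x, 1)) Eq1
        have h8 := congrArg (fun u : H => (u : ∀ _ : ℤ × Fin 2, ℂ) (x + 1, 1)) Eq1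
        simp only [lp.coeFn_add, lp.coeFn_sub, lp.coeFn_smul, Pi.add_apply, Pi.sub_apply,
          Pi.smul_apply, smul_eq_mul, e_apply, show x ≠ x + 1 from by omega,
          show (x:ℤ) + 1 ≠ x from by omega, show x ≠ x - 1 from by omega,
          show (x:ℤ) - 1 ≠ x from by omega, show (x:ℤ) + 1 ≠ x - 1 from by omega,
          show (x:ℤ) - 1 ≠ x + 1 from by omega, show ((0:Fin 2) = 1) = False from by decide,
          show ((1:Fin 2) = 0) = False from by decide, eq_self_iff_true, and_true, true_and,
          and_false, false_and, and_self, if_true, if_false, mul_one, mul_zero, zero_mul,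
          one_mul, add_zero, zero_add, sub_zero, zero_sub, neg_zero, neg_neg,
          Complex.ofReal_zero, Complex.ofReal_one] at h3 h4 h7 h5 h6 h8
        exact ⟨by linear_combination h3, by linear_combination -h4, by linear_combination h7,
          by linear_combination h5, by linear_combination h6, by linear_combination h8⟩
    have hE12 : ∀ x : ℤ, 2 ≤ x → (((Real.sqrt (1 - r x ^ 2) : ℝ) : ℂ) * ((Real.sqrt (1 - p (x - 1) ^ 2) : ℝ) : ℂ) * a (x - 1) = a x * (((Real.sqrt (1 - r' x ^ 2) : ℝ) : ℂ) * ((Real.sqrt (1 - p' (x - 1) ^ 2) : ℝ) : ℂ))) ∧ (Complex.exp (Complex.I * (κ x : ℂ)) * (r x : ℂ) * ((Real.sqrt (1 - p (x - 1) ^ 2) : ℝ) : ℂ) * a (x - 1) = d x * (Complex.exp (Complex.I * (κ' x : ℂ)) * (r' x : ℂ) * ((Real.sqrt (1 - p' (x - 1) ^ 2) : ℝ) : ℂ))) := by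
      intro x hx2
      have hx : (1:ℤ) ≤ x := by omega
      have Eq0 := hVW0 x hx
      have Eq1 := hVW1 x hx
      rw [V_e0 hr0 hr1 hV x, hWe0' x hx] at Eq0
      rw [V_e1 hr0 hr1 hV x, hWe1' x hx] at Eq1
      simp only [map_add, map_sub, map_smul] at Eq0 Eq1
      rw [V_e0 hr0' hr1' hV' x] at Eq0
      rw [V_e1 hr0' hr1' hV' x] at Eq1
      rw [hWe0' x hx, hWe1' x hx, hWe1' (x + 1) (by omega), hWe0' (x - 1) (by omega)] at Eq0 Eq1
      have h1 := congrArg (fun u : H => (u : ∀ _ : ℤ × Fin 2, ℂ) (x - 1, 0)) Eq0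
      have h2 := congrArg (fun u : H => (u : ∀ _ : ℤ × Fin 2, ℂ) (x - 1, 0)) Eq1
      simp only [lp.coeFn_add, lp.coeFn_sub, lp.coeFn_smul, Pi.add_apply, Pi.sub_apply,
        Pi.smul_apply, smul_eq_mul, e_apply, show x ≠ x + 1 from by omega,
        show (x:ℤ) + 1 ≠ x from by omega, show x ≠ x - 1 from by omega,
        show (x:ℤ) - 1 ≠ x from by omega, show (x:ℤ) + 1 ≠ x - 1 from by omega,
        show (x:ℤ) - 1 ≠ x + 1 from by omega, show ((0:Fin 2) = 1) = False from by decide,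
        show ((1:Fin 2) = 0) = False from by decide, eq_self_iff_true, and_true, true_and,
        and_false, false_and, and_self, if_true, if_false, mul_one, mul_zero, zero_mul,
        one_mul, add_zero, zero_add, sub_zero, zero_sub, neg_zero, neg_neg,
        Complex.ofReal_zero, Complex.ofReal_one] at h1 h2
      exact ⟨by linear_combination h1, by linear_combination -h2⟩
    have hrqq : ∀ x : ℤ, 1 ≤ x →
        r x * Real.sqrt (1 - p x ^ 2) = r' x * Real.sqrt (1 - p' x ^ 2) := by
      intro x hx
      have h := congrArg (‖·‖) (hMain x hx).2.2.1
      simp only [norm_mul, abs_exp_negI, Complex.norm_real, Real.norm_eq_abs, habs_d (x + 1) (by omega),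
        habs_a x hx, one_mul, mul_one] at h
      rw [abs_of_nonneg (hr0 x), abs_of_nonneg (hr0' x), abs_of_nonneg (Real.sqrt_nonneg _),
        abs_of_nonneg (Real.sqrt_nonneg _)] at h
      linear_combination h
    have hsqq : ∀ x : ℤ, 1 ≤ x →
        Real.sqrt (1 - r x ^ 2) * Real.sqrt (1 - p x ^ 2)
          = Real.sqrt (1 - r' x ^ 2) * Real.sqrt (1 - p' x ^ 2) := by
      intro x hx
      have h := congrArg (‖·‖) (hMain x hx).2.2.2.2.2
      simp only [norm_mul, Complex.norm_real, Real.norm_eq_abs, habs_d (x + 1) (by omega),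
        habs_d x hx, one_mul, mul_one] at h
      rw [abs_of_nonneg (Real.sqrt_nonneg _), abs_of_nonneg (Real.sqrt_nonneg _),
        abs_of_nonneg (Real.sqrt_nonneg _), abs_of_nonneg (Real.sqrt_nonneg _)] at h
      linear_combination h
    have hqeq : ∀ x : ℤ, 1 ≤ x →
        Real.sqrt (1 - p x ^ 2) = Real.sqrt (1 - p' x ^ 2) := by
      intro x hx
      have h1 := hrqq x hx
      have h2 := hsqq x hx
      have hs2 : Real.sqrt (1 - r x ^ 2) ^ 2 = 1 - r x ^ 2 :=
        Real.sq_sqrt (by nlinarith [hr0 x, hr1 x])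
      have hs2' : Real.sqrt (1 - r' x ^ 2) ^ 2 = 1 - r' x ^ 2 :=
        Real.sq_sqrt (by nlinarith [hr0' x, hr1' x])
      have hq2 : Real.sqrt (1 - p x ^ 2) ^ 2 = Real.sqrt (1 - p' x ^ 2) ^ 2 := by
        linear_combination (r x * Real.sqrt (1 - p x ^ 2)
            + r' x * Real.sqrt (1 - p' x ^ 2)) * h1
          + (Real.sqrt (1 - r x ^ 2) * Real.sqrt (1 - p x ^ 2)
            + Real.sqrt (1 - r' x ^ 2) * Real.sqrt (1 - p' x ^ 2)) * h2
          - Real.sqrt (1 - p x ^ 2) ^ 2 * hs2 + Real.sqrt (1 - p' x ^ 2) ^ 2 * hs2'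
      rw [← Real.sqrt_sq (Real.sqrt_nonneg (1 - p x ^ 2)), hq2,
        Real.sqrt_sq (Real.sqrt_nonneg (1 - p' x ^ 2))]
    have hpeq : ∀ x : ℤ, 1 ≤ x → p x = p' x := by
      intro x hx
      have hA : Real.sqrt (1 - p x ^ 2) ^ 2 = 1 - p x ^ 2 :=
        Real.sq_sqrt (by nlinarith [(hp x).1, (hp x).2])
      have hB : Real.sqrt (1 - p' x ^ 2) ^ 2 = 1 - p' x ^ 2 :=
        Real.sq_sqrt (by nlinarith [(hp' x).1, (hp' x).2])
      have hp2 : p x ^ 2 = p' x ^ 2 := by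
        linear_combination hA - hB - (Real.sqrt (1 - p x ^ 2)
          + Real.sqrt (1 - p' x ^ 2)) * (hqeq x hx)
      rw [← Real.sqrt_sq (hp x).1, hp2, Real.sqrt_sq (hp' x).1]
    have hreq : ∀ x : ℤ, 1 ≤ x → r x = r' x := by
      intro x hx
      have h1 := hrqq x hx
      rw [← hqeq x hx] at h1
      exact mul_right_cancel₀ (ne_of_gt (hqpos x hx)) h1
    have hseq : ∀ x : ℤ, 1 ≤ x → Real.sqrt (1 - r x ^ 2) = Real.sqrt (1 - r' x ^ 2) := by
      intro x hx
      rw [hreq x hx]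
    have hkey : ∀ x : ℤ, 1 ≤ x → κ x = κ' x ∧ θ x = θ' x ∧ d (x + 1) = a x := by
      refine Int.le_induction ?_ ?_
      ·
        have hE := hMain 1 le_rfl
        rw [show (1:ℤ) - 1 = 0 from by norm_num] at hE
        rw [hp0, hp0', hθ0, hθ0'] at hE
        simp only [Complex.ofReal_zero, mul_zero, neg_zero, Complex.exp_zero,
          Complex.ofReal_one, mul_one, one_mul] at hE
        rw [← hpeq 1 le_rfl, ← hreq 1 le_rfl] at hE
        obtain ⟨hE3, hE4, hE7, hE5, hE6, hE8⟩ := hE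
        have hκ1 : κ 1 = κ' 1 := by
          rcases eq_or_ne (r 1) 0 with h0 | hne
          · rw [hrκ 1 h0, hrκ' 1 (by rw [← hreq 1 le_rfl]; exact h0)]
          · have hEK : Complex.exp (Complex.I * (κ 1 : ℂ))
                = Complex.exp (Complex.I * (κ' 1 : ℂ)) :=
              eq_of_sub_mul_eq_zero (M := (r 1 : ℂ) * d 1) (by linear_combination hE6)
                (mul_ne_zero (Complex.ofReal_ne_zero.2 hne) (hdne 1 le_rfl))
            exact exp_I_inj (hκ 1) (hκ' 1) hEK
        rw [← hκ1] at hE3 hE7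
        have hθ1 : θ 1 = θ' 1 := by
          rcases eq_or_ne (p 1) 0 with h0 | hpne
          · rw [hpθ 1 h0, hpθ' 1 (by rw [← hpeq 1 le_rfl]; exact h0)]
          · rcases eq_or_ne (Real.sqrt (1 - r 1 ^ 2)) 0 with hs0 | hsne
            · have hrne : r 1 ≠ 0 := by
                intro h; rw [hs_of_r 1 h] at hs0; norm_num at hs0
              have hET : Complex.exp (Complex.I * (θ 1 : ℂ))
                  = Complex.exp (Complex.I * (θ' 1 : ℂ)) :=
                eq_of_sub_mul_eq_zero (M := Complex.exp (-(Complex.I * (κ 1 : ℂ))) * (r 1 : ℂ) * (p 1 : ℂ) * a 1) (by linear_combination hE3)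
                  (mul_ne_zero (mul_ne_zero (mul_ne_zero (hexne _)
                    (Complex.ofReal_ne_zero.2 hrne)) (Complex.ofReal_ne_zero.2 hpne))
                    (hane 1 le_rfl))
              exact exp_I_inj (hθ 1) (hθ' 1) hET
            · have hda : d 1 = a 1 :=
                eq_of_sub_mul_eq_zero (M := ((Real.sqrt (1 - r 1 ^ 2) : ℝ) : ℂ)) (by linear_combination hE4)
                  (Complex.ofReal_ne_zero.2 hsne)
              rw [hda] at hE5
              have hET : Complex.exp (Complex.I * (θ 1 : ℂ))
                  = Complex.exp (Complex.I * (θ' 1 : ℂ)) :=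
                eq_of_sub_mul_eq_zero (M := ((Real.sqrt (1 - r 1 ^ 2) : ℝ) : ℂ) * (p 1 : ℂ) * a 1) (by linear_combination hE5)
                  (mul_ne_zero (mul_ne_zero (Complex.ofReal_ne_zero.2 hsne)
                    (Complex.ofReal_ne_zero.2 hpne)) (hane 1 le_rfl))
              exact exp_I_inj (hθ 1) (hθ' 1) hET
        have hd2 : d (1 + 1) = a 1 := by
          rcases eq_or_ne (r 1) 0 with h0 | hne
          · have hsne : Real.sqrt (1 - r 1 ^ 2) ≠ 0 := by
              rw [hs_of_r 1 h0]; norm_num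
            have hda : d 1 = a 1 :=
              eq_of_sub_mul_eq_zero (M := ((Real.sqrt (1 - r 1 ^ 2) : ℝ) : ℂ)) (by linear_combination hE4)
                (Complex.ofReal_ne_zero.2 hsne)
            have hdd2 : d (1 + 1) = d 1 :=
              eq_of_sub_mul_eq_zero (M := ((Real.sqrt (1 - r 1 ^ 2) : ℝ) : ℂ) * ((Real.sqrt (1 - p 1 ^ 2) : ℝ) : ℂ)) (by linear_combination hE8)
                (mul_ne_zero (Complex.ofReal_ne_zero.2 hsne) (hqne 1 le_rfl))
            rw [hdd2, hda]
          · exact eq_of_sub_mul_eq_zero (M := Complex.exp (-(Complex.I * (κ 1 : ℂ))) * (r 1 : ℂ) * ((Real.sqrt (1 - p 1 ^ 2) : ℝ) : ℂ)) (by linear_combination hE7)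
              (mul_ne_zero (mul_ne_zero (hexne _) (Complex.ofReal_ne_zero.2 hne))
                (hqne 1 le_rfl))
        exact ⟨hκ1, hθ1, hd2⟩
      · intro x hx ih
        obtain ⟨ihκ, ihθ, ihd⟩ := ih
        have hx1 : (1:ℤ) ≤ x + 1 := by omega
        have hE := hMain (x + 1) hx1
        have hF := hE12 (x + 1) (by omega)
        rw [show x + 1 - 1 = x from by omega] at hE hF
        rw [← hpeq (x + 1) hx1, ← hreq (x + 1) hx1, ← hpeq x hx, ← ihθ] at hE
        rw [← hreq (x + 1) hx1, ← hpeq x hx] at hF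
        obtain ⟨hE3, hE4, hE7, hE5, hE6, hE8⟩ := hE
        obtain ⟨hF1, hF2⟩ := hF
        rw [ihd] at hF2
        have hκs : κ (x + 1) = κ' (x + 1) := by
          rcases eq_or_ne (r (x + 1)) 0 with h0 | hne
          · rw [hrκ _ h0, hrκ' _ (by rw [← hreq (x + 1) hx1]; exact h0)]
          · have hEK : Complex.exp (Complex.I * (κ (x + 1) : ℂ))
                = Complex.exp (Complex.I * (κ' (x + 1) : ℂ)) :=
              eq_of_sub_mul_eq_zero (M := (r (x + 1) : ℂ) * ((Real.sqrt (1 - p x ^ 2) : ℝ) : ℂ) * a x) (by linear_combination hF2)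
                (mul_ne_zero (mul_ne_zero (Complex.ofReal_ne_zero.2 hne)
                  (hqne x hx)) (hane x hx))
            exact exp_I_inj (hκ _) (hκ' _) hEK
        rw [← hκs] at hE3 hE7
        have hθs : θ (x + 1) = θ' (x + 1) := by
          rcases eq_or_ne (p (x + 1)) 0 with h0 | hpne
          · rw [hpθ _ h0, hpθ' _ (by rw [← hpeq (x + 1) hx1]; exact h0)]
          · rcases eq_or_ne (Real.sqrt (1 - r (x + 1) ^ 2)) 0 with hs0 | hsne
            · have hrne : r (x + 1) ≠ 0 := by
                intro h; rw [hs_of_r _ h] at hs0; norm_num at hs0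
              have hET : Complex.exp (Complex.I * (θ (x + 1) : ℂ))
                  = Complex.exp (Complex.I * (θ' (x + 1) : ℂ)) :=
                eq_of_sub_mul_eq_zero (M := Complex.exp (-(Complex.I * (κ (x + 1) : ℂ))) * (r (x + 1) : ℂ) * (p (x + 1) : ℂ) * a (x + 1)) (by linear_combination hE3)
                  (mul_ne_zero (mul_ne_zero (mul_ne_zero (hexne _)
                    (Complex.ofReal_ne_zero.2 hrne)) (Complex.ofReal_ne_zero.2 hpne))
                    (hane _ hx1))
              exact exp_I_inj (hθ _) (hθ' _) hET
            · have haa2 : a x = a (x + 1) :=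
                eq_of_sub_mul_eq_zero (M := ((Real.sqrt (1 - r (x + 1) ^ 2) : ℝ) : ℂ) * ((Real.sqrt (1 - p x ^ 2) : ℝ) : ℂ)) (by linear_combination hF1)
                  (mul_ne_zero (Complex.ofReal_ne_zero.2 hsne) (hqne x hx))
              have hda2 : d (x + 1) = a (x + 1) := ihd.trans haa2
              rw [hda2] at hE5
              have hET : Complex.exp (Complex.I * (θ (x + 1) : ℂ))
                  = Complex.exp (Complex.I * (θ' (x + 1) : ℂ)) :=
                eq_of_sub_mul_eq_zero (M := ((Real.sqrt (1 - r (x + 1) ^ 2) : ℝ) : ℂ) * (p (x + 1) : ℂ) * a (x + 1)) (by linear_combination hE5)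
                  (mul_ne_zero (mul_ne_zero (Complex.ofReal_ne_zero.2 hsne)
                    (Complex.ofReal_ne_zero.2 hpne)) (hane _ hx1))
              exact exp_I_inj (hθ _) (hθ' _) hET
        have hds : d (x + 1 + 1) = a (x + 1) := by
          rcases eq_or_ne (r (x + 1)) 0 with h0 | hne
          · have hsne : Real.sqrt (1 - r (x + 1) ^ 2) ≠ 0 := by
              rw [hs_of_r _ h0]; norm_num
            have haa2 : a x = a (x + 1) :=
              eq_of_sub_mul_eq_zero (M := ((Real.sqrt (1 - r (x + 1) ^ 2) : ℝ) : ℂ) * ((Real.sqrt (1 - p x ^ 2) : ℝ) : ℂ)) (by linear_combination hF1)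
                (mul_ne_zero (Complex.ofReal_ne_zero.2 hsne) (hqne x hx))
            have hdd2 : d (x + 1 + 1) = d (x + 1) :=
              eq_of_sub_mul_eq_zero (M := ((Real.sqrt (1 - r (x + 1) ^ 2) : ℝ) : ℂ) * ((Real.sqrt (1 - p (x + 1) ^ 2) : ℝ) : ℂ)) (by linear_combination hE8)
                (mul_ne_zero (Complex.ofReal_ne_zero.2 hsne) (hqne _ hx1))
            rw [hdd2, ihd, haa2]
          · exact eq_of_sub_mul_eq_zero (M := Complex.exp (-(Complex.I * (κ (x + 1) : ℂ))) * (r (x + 1) : ℂ) * ((Real.sqrt (1 - p (x + 1) ^ 2) : ℝ) : ℂ)) (by linear_combination hE7)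
              (mul_ne_zero (mul_ne_zero (hexne _) (Complex.ofReal_ne_zero.2 hne))
                (hqne _ hx1))
        exact ⟨hκs, hθs, hds⟩
    intro x hx
    exact ⟨hpeq x hx, hreq x hx, (hkey x hx).2.1, (hkey x hx).1⟩





  · intro hparam
    have hpx : ∀ y : ℤ, 0 ≤ y → p y = p' y := by
      intro y hy
      rcases eq_or_lt_of_le hy with h | h
      · rw [← h, hp0, hp0']
      · exact (hparam y h).1
    have hθx : ∀ y : ℤ, 0 ≤ y → θ y = θ' y := by
      intro y hy
      rcases eq_or_lt_of_le hy with h | h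
      · rw [← h, hθ0, hθ0']
      · exact (hparam y h).2.2.1
    have hgen : ∀ x : ℤ, 1 ≤ x → ∀ i : Fin 2, V (e x i) = V' (e x i) := by
      intro x hx i
      fin_cases i
      · show V (e x 0) = V' (e x 0)
        rw [V_e0 hr0 hr1 hV x, V_e0 hr0' hr1' hV' x,
          hpx x (by omega), hpx (x - 1) (by omega), (hparam x hx).2.1,
          hθx x (by omega), hθx (x - 1) (by omega), (hparam x hx).2.2.2]
      · show V (e x 1) = V' (e x 1)
        rw [V_e1 hr0 hr1 hV x, V_e1 hr0' hr1' hV' x,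
          hpx x (by omega), hpx (x - 1) (by omega), (hparam x hx).2.1,
          hθx x (by omega), hθx (x - 1) (by omega), (hparam x hx).2.2.2]
    refine ⟨LinearIsometryEquiv.refl ℂ H, fun x _ => ?_, fun ψ hψ => ?_⟩
    · have : ((LinearIsometryEquiv.refl ℂ H).toLinearEquiv : H →ₗ[ℂ] H) = LinearMap.id := rfl
      rw [this, Submodule.map_id]
    · exact eq_on_Hge hgen ψ hψ
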